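/- Let 1 ≤ k ≤ n−1 and let I_k = (x_{k+1}, …, x_n) be the ideal of A generated by the last n−k variables. Then L_k = { D ∈ W_n : D(I_k) ⊆ I_k } is a maximal subalgebra of the Lie algebra W_n: L_k is a proper Lie subalgebra of W_n and no Lie subalgebra L satisfies L_k ⊊ L ⊊ W_n. -/

import Mathlib

open MvPolynomial

/-- `Wn K n` is the Lie algebra of all `K`-derivations of `K[x_1, …, x_n]`. -/
abbrev Wn (K : Type) [Field K] (n : ℕ) :=
  Derivation K (MvPolynomial (Fin n) K) (MvPolynomial (Fin n) K)

set_option linter.unusedSectionVars false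
set_option linter.unusedVariables false

section Aux
variable {K : Type} [Field K] [CharZero K] {n : ℕ}

/-- basic derivation `f * ∂/∂x_i` -/
noncomputable def dd (i : Fin n) (f : MvPolynomial (Fin n) K) : Wn K n :=
  MvPolynomial.mkDerivation K (Pi.single i f)

@[simp] lemma dd_X (i j : Fin n) (f : MvPolynomial (Fin n) K) :
    dd i f (X j) = if j = i then f else 0 := by
  simp [dd, mkDerivation_X, Pi.single_apply]

noncomputable def phi (k : ℕ) : MvPolynomial (Fin n) K →ₐ[K] MvPolynomial (Fin n) K :=
  aeval (fun i : Fin n => if k ≤ (i : ℕ) then 0 else X i)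

@[simp] lemma phi_X (k : ℕ) (i : Fin n) :
    phi (K := K) k (X i) = if k ≤ (i : ℕ) then 0 else X i := by
  simp [phi]

noncomputable def Ik (K : Type) [Field K] (n k : ℕ) : Ideal (MvPolynomial (Fin n) K) :=
  Ideal.span {f : MvPolynomial (Fin n) K | ∃ i : Fin n, k ≤ (i : ℕ) ∧ f = MvPolynomial.X i}

lemma X_mem_Ik {k : ℕ} {i : Fin n} (h : k ≤ (i : ℕ)) : X i ∈ Ik K n k :=
  Ideal.subset_span ⟨i, h, rfl⟩

lemma sub_phi_mem (k : ℕ) (p : MvPolynomial (Fin n) K) : p - phi k p ∈ Ik K n k := by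
  induction p using MvPolynomial.induction_on with
  | C a => simp [phi]
  | add p q hp hq => simpa [map_add, add_sub_add_comm] using add_mem hp hq
  | mul_X p i hp =>
    have : p * X i - phi k (p * X i)
        = (p - phi k p) * X i + phi k p * (X i - phi k (X i)) := by rw [map_mul]; ring
    rw [this]
    refine add_mem (Ideal.mul_mem_right _ _ hp) ?_
    by_cases h : k ≤ (i : ℕ)
    · refine Ideal.mul_mem_left _ _ ?_
      simpa [h] using X_mem_Ik (K := K) h
    · simp [h]

lemma mem_Ik_iff (k : ℕ) (p : MvPolynomial (Fin n) K) : p ∈ Ik K n k ↔ phi k p = 0 := by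
  constructor
  · intro hp
    refine Submodule.span_induction ?_ ?_ ?_ ?_ hp
    · rintro x ⟨i, hi, rfl⟩; simp [hi]
    · simp
    · intro x y _ _ hx hy; simp [hx, hy]
    · intro a x _ hx; simp [smul_eq_mul, hx]
  · intro hp
    have := sub_phi_mem k p
    rwa [hp, sub_zero] at this

end Aux

section PD
variable {K : Type} [Field K] [CharZero K] {σ : Type*} [DecidableEq σ]

lemma coeff_pderiv (i : σ) (p : MvPolynomial σ K) (m : σ →₀ ℕ) :
    coeff m (pderiv i p) = (m i + 1 : ℕ) * coeff (m + Finsupp.single i 1) p := by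
  induction p using MvPolynomial.induction_on' with
  | add p q hp hq => simp [hp, hq, mul_add]
  | monomial s a =>
    rw [pderiv_monomial, coeff_monomial, coeff_monomial]
    by_cases h : s i = 0
    · have hs : s - Finsupp.single i 1 = s := by
        ext j
        by_cases hj : i = j
        · subst hj; simp [Finsupp.tsub_apply, Finsupp.single_apply, h]
        · simp [Finsupp.tsub_apply, Finsupp.single_apply, hj]
      have hne : s ≠ m + Finsupp.single i 1 := by
        intro he
        apply absurd h
        simp [he, Finsupp.add_apply, Finsupp.single_apply]
      rw [hs, if_neg hne, mul_zero]
      by_cases hsm : s = m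
      · rw [if_pos hsm, h]; simp
      · rw [if_neg hsm]
    · have hle : Finsupp.single i 1 ≤ s := by
        rw [Finsupp.single_le_iff]; omega
      have hiff : s - Finsupp.single i 1 = m ↔ s = m + Finsupp.single i 1 :=
        tsub_eq_iff_eq_add_of_le hle
      by_cases hc : s = m + Finsupp.single i 1
      · rw [if_pos (hiff.2 hc), if_pos hc]
        have : s i = m i + 1 := by simp [hc, Finsupp.add_apply, Finsupp.single_apply]
        rw [this]; push_cast; ring
      · rw [if_neg (fun hh => hc (hiff.1 hh)), if_neg hc, mul_zero]

lemma pderiv_coeff_ne_zero {i : σ} {p : MvPolynomial σ K} {m : σ →₀ ℕ}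
    (hm : coeff m p ≠ 0) (hi : m i ≠ 0) : pderiv i p ≠ 0 := by
  intro h0
  have hle : Finsupp.single i 1 ≤ m := by rw [Finsupp.single_le_iff]; omega
  have key := coeff_pderiv i p (m - Finsupp.single i 1)
  rw [h0, tsub_add_cancel_of_le hle, coeff_zero] at key
  have hmi : ((m - Finsupp.single i 1 : σ →₀ ℕ)) i + 1 = m i := by
    have h2 : ((m - Finsupp.single i 1 : σ →₀ ℕ)) i = m i - 1 := by
      simp [Finsupp.tsub_apply, Finsupp.single_apply]
    omega
  rw [hmi] at key
  exact hm ((mul_eq_zero.1 key.symm).resolve_left (Nat.cast_ne_zero.2 hi))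

lemma totalDegree_pderiv_lt {i : σ} {p : MvPolynomial σ K} (h : pderiv i p ≠ 0) :
    (pderiv i p).totalDegree < p.totalDegree := by
  have key : ∀ m ∈ (pderiv i p).support,
      (m.sum fun _ e => e) < p.totalDegree := by
    intro m hm
    have hc : coeff m (pderiv i p) ≠ 0 := mem_support_iff.1 hm
    rw [_root_.coeff_pderiv] at hc
    have hc2 : coeff (m + Finsupp.single i 1) p ≠ 0 := by
      intro h0; rw [h0, mul_zero] at hc; exact hc rfl
    have hle := le_totalDegree (p := p) (mem_support_iff.2 hc2)
    have hsum : ((m + Finsupp.single i 1).sum fun _ e => e)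
        = (m.sum fun _ e => e) + 1 := by
      rw [Finsupp.sum_add_index' (fun _ => rfl) (fun _ _ _ => rfl),
        Finsupp.sum_single_index rfl]
    omega
  rw [totalDegree, Finset.sup_lt_iff]
  · exact key
  · have : (pderiv i p).support.Nonempty := support_nonempty.2 h
    obtain ⟨m, hm⟩ := this
    exact lt_of_le_of_lt (Nat.zero_le _) (key m hm)

end PD

section PD2
variable {K : Type} [Field K] [CharZero K] {n : ℕ}

lemma phi_pderiv (k : ℕ) (i : Fin n) (p : MvPolynomial (Fin n) K) :
    pderiv i (phi k p) = if k ≤ (i : ℕ) then 0 else phi k (pderiv i p) := by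
  induction p using MvPolynomial.induction_on with
  | C a => simp [phi]
  | add p q hp hq =>
    rw [map_add, map_add, map_add, hp, hq]
    by_cases h : k ≤ (i : ℕ) <;> simp [h]
  | mul_X p j hp =>
    by_cases h : k ≤ (i : ℕ)
    · have hXj : pderiv i (phi (K := K) k (X j)) = 0 := by
        by_cases hj : k ≤ (j : ℕ)
        · simp [hj]
        · have hij : j ≠ i := by intro he; subst he; exact hj h
          simp [hj, pderiv_X_of_ne hij]
      rw [if_pos h] at hp
      rw [if_pos h, map_mul, pderiv_mul, hp, hXj, zero_mul, zero_add, mul_zero]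
    · have hXj : pderiv i (phi (K := K) k (X j)) = phi k (pderiv i (X j)) := by
        by_cases hj : k ≤ (j : ℕ)
        · have hij : j ≠ i := by intro he; subst he; exact h hj
          simp [hj, pderiv_X_of_ne hij]
        · by_cases hij : j = i
          · subst hij; simp [hj, pderiv_X_self]
          · simp [hj, pderiv_X_of_ne hij]
      rw [if_neg h] at hp
      rw [if_neg h, map_mul, pderiv_mul, hp, hXj, pderiv_mul, map_add, map_mul, map_mul]

lemma eq_C_of_totalDegree_eq_zero {p : MvPolynomial (Fin n) K}
    (h : p.totalDegree = 0) : p = C (coeff 0 p) := by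
  ext m
  by_cases hm : m = 0
  · simp [hm]
  · rw [coeff_C, if_neg (fun he => hm he.symm)]
    by_contra hc
    have hmem : m ∈ p.support := mem_support_iff.2 hc
    have := (totalDegree_eq_zero_iff (Fin n) p).1 h m hmem
    exact hm (Finsupp.ext fun j => this j)

lemma exists_pderiv_ne_zero {p : MvPolynomial (Fin n) K}
    (h : p.totalDegree ≠ 0) : ∃ i : Fin n, pderiv i p ≠ 0 := by
  by_contra hall
  push_neg at hall
  apply h
  rw [totalDegree_eq_zero_iff]
  intro m hm j
  by_contra hj
  exact pderiv_coeff_ne_zero (mem_support_iff.1 hm) hj (hall j)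

end PD2

section LSec
variable {K : Type} [Field K] [CharZero K] {n : ℕ}

lemma deriv_sum_apply {ι : Type*} (s : Finset ι) (D : ι → Wn K n) (p : MvPolynomial (Fin n) K) :
    (∑ i ∈ s, D i) p = ∑ i ∈ s, D i p := by
  classical
  induction s using Finset.induction with
  | empty => simp
  | insert _ _ h ih => rw [Finset.sum_insert h, Finset.sum_insert h, Derivation.add_apply, ih]

/-- the stabilizer subalgebra -/
noncomputable def Lk (K : Type) [Field K] [CharZero K] (n k : ℕ) : LieSubalgebra K (Wn K n) where
  carrier := {D : Wn K n | ∀ f ∈ Ik K n k, D f ∈ Ik K n k}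
  add_mem' := by
    intro D E hD hE f hf
    rw [Derivation.add_apply]
    exact add_mem (hD f hf) (hE f hf)
  zero_mem' := by intro f hf; rw [Derivation.zero_apply]; exact zero_mem _
  smul_mem' := by
    intro c D hD f hf
    rw [Derivation.smul_apply, MvPolynomial.smul_eq_C_mul]
    exact Ideal.mul_mem_left _ _ (hD f hf)
  lie_mem' := by
    intro D E hD hE f hf
    rw [Derivation.commutator_apply]
    exact sub_mem (hD _ (hE f hf)) (hE _ (hD f hf))

lemma mem_Lk_iff {k : ℕ} (D : Wn K n) :
    D ∈ Lk K n k ↔ ∀ j : Fin n, k ≤ (j : ℕ) → D (X j) ∈ Ik K n k := by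
  constructor
  · intro hD j hj
    exact hD (X j) (X_mem_Ik hj)
  · intro h f hf
    have key : f ∈ Ik K n k ∧ D f ∈ Ik K n k := by
      refine Submodule.span_induction ?_ ?_ ?_ ?_ hf
      · rintro x ⟨i, hi, rfl⟩
        exact ⟨X_mem_Ik hi, h i hi⟩
      · simp
      · intro x y _ _ hx hy
        exact ⟨add_mem hx.1 hy.1, by rw [map_add]; exact add_mem hx.2 hy.2⟩
      · intro a x _ hx
        refine ⟨Ideal.mul_mem_left _ _ hx.1, ?_⟩
        rw [smul_eq_mul, Derivation.leibniz, smul_eq_mul, smul_eq_mul]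
        exact add_mem (Ideal.mul_mem_left _ _ hx.2) (Ideal.mul_mem_right _ _ hx.1)
    exact key.2

lemma apply_mem_Ik {k : ℕ} {D : Wn K n} (h : ∀ j : Fin n, D (X j) ∈ Ik K n k)
    (p : MvPolynomial (Fin n) K) : D p ∈ Ik K n k := by
  induction p using MvPolynomial.induction_on with
  | C a =>
    have : D (C a) = 0 := by
      rw [← MvPolynomial.algebraMap_eq]
      exact Derivation.map_algebraMap D a
    rw [this]; exact zero_mem _
  | add p q hp hq => rw [map_add]; exact add_mem hp hq
  | mul_X p i hp =>
    rw [Derivation.leibniz, smul_eq_mul, smul_eq_mul]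
    exact add_mem (Ideal.mul_mem_left _ _ (h i)) (Ideal.mul_mem_left _ _ hp)

lemma dd_mem_Lk_of_lt {k : ℕ} {i : Fin n} (h : (i : ℕ) < k) (f : MvPolynomial (Fin n) K) :
    dd i f ∈ Lk K n k := by
  rw [mem_Lk_iff]
  intro j hj
  have : j ≠ i := by intro he; subst he; omega
  rw [dd_X, if_neg this]
  exact zero_mem _

lemma dd_mem_Lk_of_mem {k : ℕ} {i : Fin n} {f : MvPolynomial (Fin n) K} (h : f ∈ Ik K n k) :
    dd i f ∈ Lk K n k := by
  rw [mem_Lk_iff]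
  intro j hj
  rw [dd_X]
  split
  · exact h
  · exact zero_mem _

lemma eq_sum_dd (E : Wn K n) : E = ∑ i : Fin n, dd i (E (X i)) := by
  apply derivation_ext
  intro j
  rw [deriv_sum_apply]
  rw [Finset.sum_eq_single j (fun i _ hij => by rw [dd_X, if_neg (Ne.symm hij)])
    (fun h => absurd (Finset.mem_univ j) h)]
  rw [dd_X, if_pos rfl]

end LSec

section Core
variable {K : Type} [Field K] [CharZero K] {n : ℕ}

lemma dd_one (i : Fin n) : dd i (1 : MvPolynomial (Fin n) K) = pderiv i :=
  (pderiv_def i).symm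

lemma dd_sub (i : Fin n) (f g : MvPolynomial (Fin n) K) :
    dd i (f - g) = dd i f - dd i g := by
  apply derivation_ext
  intro m
  rw [Derivation.sub_apply, dd_X, dd_X, dd_X]
  split <;> simp

lemma dd_smul (i : Fin n) (c : K) (f : MvPolynomial (Fin n) K) :
    dd i (c • f) = c • dd i f := by
  apply derivation_ext
  intro m
  rw [Derivation.smul_apply, dd_X, dd_X]
  split <;> simp

lemma absorb {k : ℕ} {M : LieSubalgebra K (Wn K n)} (hM : Lk K n k ≤ M)
    {D : Wn K n} (hD : D ∈ M) {j i : Fin n} (hj : k ≤ (j : ℕ)) (hi : k ≤ (i : ℕ))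
    (h : MvPolynomial (Fin n) K) : dd i (h * D (X j)) ∈ M := by
  set A1 : Wn K n := dd i (X j * h) with hA1def
  have hA1X : ∀ m : Fin n, A1 (X m) = if m = i then X j * h else 0 := fun m => by
    rw [hA1def, dd_X]
  have hA1I : ∀ p, A1 p ∈ Ik K n k := by
    intro p
    apply apply_mem_Ik
    intro m
    rw [hA1X]
    split
    · exact Ideal.mul_mem_right _ _ (X_mem_Ik hj)
    · exact zero_mem _
  have hA1M : A1 ∈ M := hM (dd_mem_Lk_of_mem (Ideal.mul_mem_right _ _ (X_mem_Ik hj)))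
  have hF : ⁅A1, D⁆ ∈ M := M.lie_mem hA1M hD
  have hFG : ⁅A1, D⁆ + dd i (h * D (X j)) ∈ Lk K n k := by
    rw [mem_Lk_iff]
    intro m hm
    rw [Derivation.add_apply, Derivation.commutator_apply, dd_X, dd_X]
    by_cases hmi : m = i
    · rw [if_pos hmi, if_pos hmi, Derivation.leibniz]
      have he : A1 (D (X m)) - ((X j : MvPolynomial (Fin n) K) • D h + h • D (X j)) + h * D (X j)
          = A1 (D (X m)) - X j * D h := by
        rw [smul_eq_mul, smul_eq_mul]; ring
      rw [he]
      exact sub_mem (hA1I _) (Ideal.mul_mem_right _ _ (X_mem_Ik hj))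
    · rw [if_neg hmi, if_neg hmi, map_zero, sub_zero, add_zero]
      exact hA1I _
  have hsub := M.sub_mem (hM hFG) hF
  simpa using hsub

lemma diff_step {k : ℕ} {M : LieSubalgebra K (Wn K n)} (hM : Lk K n k ≤ M)
    {q : MvPolynomial (Fin n) K} {j : Fin n} (hj : k ≤ (j : ℕ)) (hq : dd j q ∈ M)
    {i : Fin n} (hi : (i : ℕ) < k) : dd j (pderiv i q) ∈ M := by
  have h1 : dd i (1 : MvPolynomial (Fin n) K) ∈ M := hM (dd_mem_Lk_of_lt hi _)
  have hF : ⁅dd i (1 : MvPolynomial (Fin n) K), dd j q⁆ ∈ M := M.lie_mem h1 hq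
  have heq : ⁅dd i (1 : MvPolynomial (Fin n) K), dd j q⁆ = dd j (pderiv i q) := by
    apply derivation_ext
    intro m
    rw [Derivation.commutator_apply, dd_X, dd_X, dd_X]
    by_cases hmj : m = j
    · have hmi : m ≠ i := by intro he; subst he; subst hmj; omega
      rw [if_pos hmj, if_pos hmj, if_neg hmi, map_zero, sub_zero, dd_one]
    · rw [if_neg hmj, if_neg hmj, map_zero, zero_sub]
      by_cases hmi : m = i
      · rw [if_pos hmi, Derivation.map_one_eq_zero, neg_zero]
      · rw [if_neg hmi, map_zero, neg_zero]
  rw [heq] at hF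
  exact hF

lemma const_step {k : ℕ} {M : LieSubalgebra K (Wn K n)} (hM : Lk K n k ≤ M)
    {j : Fin n} (hj : k ≤ (j : ℕ)) :
    ∀ d : ℕ, ∀ q : MvPolynomial (Fin n) K, (phi k q).totalDegree ≤ d → phi k q ≠ 0 →
      dd j q ∈ M → dd j (1 : MvPolynomial (Fin n) K) ∈ M := by
  have base : ∀ q : MvPolynomial (Fin n) K, (phi k q).totalDegree = 0 → phi k q ≠ 0 →
      dd j q ∈ M → dd j (1 : MvPolynomial (Fin n) K) ∈ M := by
    intro q h0 hne hq
    set c : K := coeff 0 (phi k q) with hc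
    have hqc : phi k q = C c := eq_C_of_totalDegree_eq_zero h0
    have hcne : c ≠ 0 := by
      intro h; rw [h, map_zero] at hqc; exact hne hqc
    have hsub : q - C c ∈ Ik K n k := by
      rw [mem_Ik_iff, map_sub, hqc]
      have : phi (K := K) (n := n) k (C c) = C c := by simp [phi]
      rw [this, sub_self]
    have hCc : dd j (C c) ∈ M := by
      have := M.sub_mem hq (hM (dd_mem_Lk_of_mem (i := j) hsub))
      rwa [← dd_sub, sub_sub_cancel] at this
    have h1 : dd j (1 : MvPolynomial (Fin n) K) = c⁻¹ • dd j (C c) := by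
      rw [← dd_smul, MvPolynomial.smul_eq_C_mul, ← map_mul, inv_mul_cancel₀ hcne, map_one]
    rw [h1]
    exact M.smul_mem _ hCc
  intro d
  induction d with
  | zero =>
    intro q hdeg hne hq
    exact base q (Nat.le_zero.1 hdeg) hne hq
  | succ d ih =>
    intro q hdeg hne hq
    by_cases h0 : (phi k q).totalDegree = 0
    · exact base q h0 hne hq
    · obtain ⟨i, hi⟩ := exists_pderiv_ne_zero h0
      have hik : (i : ℕ) < k := by
        by_contra hge
        push_neg at hge
        rw [phi_pderiv, if_pos hge] at hi
        exact hi rfl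
      have hphi : pderiv i (phi k q) = phi k (pderiv i q) := by
        rw [phi_pderiv, if_neg (not_le.2 hik)]
      have hlt := totalDegree_pderiv_lt hi
      refine ih (pderiv i q) ?_ ?_ (diff_step hM hj hq hik)
      · rw [← hphi]; omega
      · rw [← hphi]; exact hi

end Core

/-- For `1 ≤ k ≤ n − 1`, the stabilizer `L_k = { D ∈ Wn : D(I_k) ⊆ I_k }` of the ideal
`I_k = (x_{k+1}, …, x_n)` (generated by the last `n − k` variables) is a maximal Lie
subalgebra of `Wn`: a proper Lie subalgebra with no Lie subalgebra strictly between
it and `Wn`. -/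
theorem stabilizer_of_coordinate_ideal_is_maximal
    {K : Type} [Field K] [IsAlgClosed K] [CharZero K] {n : ℕ}
    (k : ℕ) (hk1 : 1 ≤ k) (hk2 : k < n)
    (I : Ideal (MvPolynomial (Fin n) K))
    (hI : I = Ideal.span {f : MvPolynomial (Fin n) K |
      ∃ i : Fin n, k ≤ (i : ℕ) ∧ f = MvPolynomial.X i}) :
    ∃ L : LieSubalgebra K (Wn K n),
      (L : Set (Wn K n)) = {D : Wn K n | ∀ f ∈ I, D f ∈ I} ∧
      L ≠ ⊤ ∧
      ∀ M : LieSubalgebra K (Wn K n), L < M → M = ⊤ := by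
  have hIk : I = Ik K n k := hI
  subst hIk
  refine ⟨Lk K n k, rfl, ?_, ?_⟩
  · -- properness
    intro htop
    set jk : Fin n := ⟨k, hk2⟩ with hjk
    have hmem : dd jk (1 : MvPolynomial (Fin n) K) ∈ Lk K n k := by
      rw [htop]; trivial
    rw [mem_Lk_iff] at hmem
    have h1 : (1 : MvPolynomial (Fin n) K) ∈ Ik K n k := by
      have := hmem jk (by simp [hjk])
      rwa [dd_X, if_pos rfl] at this
    rw [mem_Ik_iff, map_one] at h1
    exact one_ne_zero h1
  · -- maximality
    intro M hLM
    have hM : Lk K n k ≤ M := hLM.le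
    obtain ⟨D, hDM, hDL⟩ := SetLike.exists_of_lt hLM
    rw [mem_Lk_iff] at hDL
    push_neg at hDL
    obtain ⟨j, hj, hDXj⟩ := hDL
    -- dd j (D (X j)) ∈ M
    have hg : dd j (D (X j)) ∈ M := by
      have := absorb hM hDM hj hj (1 : MvPolynomial (Fin n) K)
      rwa [one_mul] at this
    have hgne : phi k (D (X j)) ≠ 0 := fun h0 => hDXj ((mem_Ik_iff k _).2 h0)
    have hone : dd j (1 : MvPolynomial (Fin n) K) ∈ M :=
      const_step hM hj (phi k (D (X j))).totalDegree _ le_rfl hgne hg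
    have hall : ∀ (i : Fin n) (f : MvPolynomial (Fin n) K), dd i f ∈ M := by
      intro i f
      by_cases hik : (i : ℕ) < k
      · exact hM (dd_mem_Lk_of_lt hik f)
      · push_neg at hik
        have := absorb hM hone hj hik f
        rwa [dd_X, if_pos rfl, mul_one] at this
    rw [eq_top_iff]
    intro E _
    rw [eq_sum_dd E]
    exact sum_mem fun i _ => hall i (E (X i))
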